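/- arXiv:1902.06290 — 4 statements merged into one kernel-verified Lean document; each statement's English description precedes it below -/
import Mathlib

section
/- Let ξ = (ξ₁, ξ₂) be a random vector with nonnegative components whose moment generating function is finite at some point (λ, μ) with λ > 0, μ > 0; i.e., B := E[exp(λ ξ₁ + μ ξ₂)] < ∞. Then for every ε > max(λ⁻¹, μ⁻¹), the integral ∫₀^∞∫₀^∞ exp(−ε G(x,y)) dx dy is finite, where G(x,y) = −ln P(ξ₁ ≥ x, ξ₂ ≥ y) (assuming the tail probability is strictly positive for all x,y ≥ 0). -/
open Real MeasureTheory

/-- If ξ = (ξ₁,ξ₂) has nonnegative components, its MGF is finite at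
some (λ,μ) with λ,μ > 0, and the tail P(ξ₁ ≥ x, ξ₂ ≥ y) is strictly positive,
then for every ε > max(λ⁻¹, μ⁻¹) the integral
∫₀^∞∫₀^∞ exp(−ε G(x,y)) dx dy is finite, where G(x,y) = −ln P(ξ₁ ≥ x, ξ₂ ≥ y). -/
theorem stmt7 {Ω : Type*} [MeasurableSpace Ω]
    (P : Measure Ω) [IsProbabilityMeasure P]
    (ξ₁ ξ₂ : Ω → ℝ) (h₁ : Measurable ξ₁) (h₂ : Measurable ξ₂)
    (hnn : ∀ ω, 0 ≤ ξ₁ ω ∧ 0 ≤ ξ₂ ω)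
    (lam mu : ℝ) (hlam : 0 < lam) (hmu : 0 < mu)
    (hB : Integrable (fun ω => Real.exp (lam * ξ₁ ω + mu * ξ₂ ω)) P)
    (htail : ∀ x y : ℝ, 0 ≤ x → 0 ≤ y → 0 < P {ω | x ≤ ξ₁ ω ∧ y ≤ ξ₂ ω}) :
    ∀ ε : ℝ, max lam⁻¹ mu⁻¹ < ε →
      IntegrableOn
        (fun p : ℝ × ℝ => Real.exp (-ε *
          (-(Real.log ((P {ω | p.1 ≤ ξ₁ ω ∧ p.2 ≤ ξ₂ ω}).toReal)))))
        (Set.Ici (0 : ℝ) ×ˢ Set.Ici (0 : ℝ)) := by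
  intro ε hε
  have hεpos : 0 < ε := lt_trans (lt_max_iff.mpr (Or.inl (inv_pos.mpr hlam))) hε
  set B : ℝ := ∫ ω, Real.exp (lam * ξ₁ ω + mu * ξ₂ ω) ∂P with hBdef
  have hB1 : (1 : ℝ) ≤ B := by
    have : ∫ ω, (1 : ℝ) ∂P ≤ B := by
      apply integral_mono (integrable_const 1) hB
      intro ω
      obtain ⟨hn1, hn2⟩ := hnn ω
      have : 0 ≤ lam * ξ₁ ω + mu * ξ₂ ω := by positivity
      simpa using Real.one_le_exp this
    simpa using this
  have hBpos : 0 < B := lt_of_lt_of_le one_pos hB1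
  -- Markov bound
  have key : ∀ x y : ℝ, 0 ≤ x → 0 ≤ y →
      (P {ω | x ≤ ξ₁ ω ∧ y ≤ ξ₂ ω}).toReal ≤ B * Real.exp (-(lam * x + mu * y)) := by
    intro x y hx hy
    set c := Real.exp (lam * x + mu * y) with hc
    have hcpos : 0 < c := Real.exp_pos _
    have hmono : P {ω | x ≤ ξ₁ ω ∧ y ≤ ξ₂ ω} ≤
        P {ω | c ≤ Real.exp (lam * ξ₁ ω + mu * ξ₂ ω)} := by
      apply measure_mono
      intro ω hω
      have : lam * x + mu * y ≤ lam * ξ₁ ω + mu * ξ₂ ω :=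
        add_le_add (mul_le_mul_of_nonneg_left hω.1 hlam.le)
          (mul_le_mul_of_nonneg_left hω.2 hmu.le)
      exact Real.exp_le_exp.mpr this
    have hmark : c * (P {ω | c ≤ Real.exp (lam * ξ₁ ω + mu * ξ₂ ω)}).toReal ≤ B :=
      mul_meas_ge_le_integral_of_nonneg (ae_of_all _ fun ω => (Real.exp_pos _).le) hB c
    have hfin1 : P {ω | x ≤ ξ₁ ω ∧ y ≤ ξ₂ ω} ≠ ⊤ := measure_ne_top _ _
    have hfin2 : P {ω | c ≤ Real.exp (lam * ξ₁ ω + mu * ξ₂ ω)} ≠ ⊤ := measure_ne_top _ _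
    have htr : (P {ω | x ≤ ξ₁ ω ∧ y ≤ ξ₂ ω}).toReal ≤
        (P {ω | c ≤ Real.exp (lam * ξ₁ ω + mu * ξ₂ ω)}).toReal :=
      ENNReal.toReal_mono hfin2 hmono
    have : c * (P {ω | x ≤ ξ₁ ω ∧ y ≤ ξ₂ ω}).toReal ≤ B :=
      le_trans (by nlinarith) hmark
    rw [hc] at this
    rw [Real.exp_neg, ← div_eq_mul_inv, le_div_iff₀ (Real.exp_pos _)]
    nlinarith
  -- measurability of f
  have hSmeas : MeasurableSet {q : (ℝ × ℝ) × Ω | q.1.1 ≤ ξ₁ q.2 ∧ q.1.2 ≤ ξ₂ q.2} := by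
    apply MeasurableSet.inter
    · exact measurableSet_le (measurable_fst.fst) (h₁.comp measurable_snd)
    · exact measurableSet_le (measurable_fst.snd) (h₂.comp measurable_snd)
  have hmeasP : Measurable (fun p : ℝ × ℝ => P {ω | p.1 ≤ ξ₁ ω ∧ p.2 ≤ ξ₂ ω}) := by
    have := measurable_measure_prodMk_left (ν := P) hSmeas
    exact this
  have hfmeas : Measurable (fun p : ℝ × ℝ => Real.exp (-ε *
      (-(Real.log ((P {ω | p.1 ≤ ξ₁ ω ∧ p.2 ≤ ξ₂ ω}).toReal))))) := by
    exact Real.measurable_exp.comp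
      (((Real.measurable_log.comp hmeasP.ennreal_toReal).neg).const_mul (-ε))
  -- dominating function
  set g : ℝ × ℝ → ℝ := fun p => (B ^ ε * Real.exp (-(ε * lam) * p.1)) * Real.exp (-(ε * mu) * p.2)
    with hg
  have hgint : IntegrableOn g (Set.Ici (0:ℝ) ×ˢ Set.Ici (0:ℝ)) := by
    rw [IntegrableOn, Measure.volume_eq_prod, ← Measure.prod_restrict]
    have hi1 : Integrable (fun x : ℝ => B ^ ε * Real.exp (-(ε * lam) * x))
        (volume.restrict (Set.Ici (0:ℝ))) := by
      apply Integrable.const_mul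
      rw [← IntegrableOn, integrableOn_Ici_iff_integrableOn_Ioi]
      exact exp_neg_integrableOn_Ioi 0 (by positivity)
    have hi2 : Integrable (fun y : ℝ => Real.exp (-(ε * mu) * y))
        (volume.restrict (Set.Ici (0:ℝ))) := by
      rw [← IntegrableOn, integrableOn_Ici_iff_integrableOn_Ioi]
      exact exp_neg_integrableOn_Ioi 0 (by positivity)
    exact hi1.mul_prod hi2
  apply Integrable.mono' hgint (hfmeas.aestronglyMeasurable.restrict)
  rw [ae_restrict_iff' (measurableSet_Ici.prod measurableSet_Ici)]
  apply ae_of_all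
  rintro ⟨x, y⟩ ⟨hx, hy⟩
  simp only [Set.mem_Ici] at hx hy
  have hp : 0 < (P {ω | x ≤ ξ₁ ω ∧ y ≤ ξ₂ ω}).toReal :=
    ENNReal.toReal_pos (htail x y hx hy).ne' (measure_ne_top _ _)
  rw [Real.norm_eq_abs, abs_of_pos (Real.exp_pos _)]
  have hlog : Real.log ((P {ω | x ≤ ξ₁ ω ∧ y ≤ ξ₂ ω}).toReal) ≤
      Real.log B + (-(lam * x + mu * y)) := by
    calc Real.log ((P {ω | x ≤ ξ₁ ω ∧ y ≤ ξ₂ ω}).toReal)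
        ≤ Real.log (B * Real.exp (-(lam * x + mu * y))) :=
          Real.log_le_log hp (key x y hx hy)
      _ = Real.log B + (-(lam * x + mu * y)) := by
          rw [Real.log_mul hBpos.ne' (Real.exp_pos _).ne', Real.log_exp]
  have : -ε * (-(Real.log ((P {ω | x ≤ ξ₁ ω ∧ y ≤ ξ₂ ω}).toReal))) ≤
      ε * Real.log B + (-(ε * lam) * x) + (-(ε * mu) * y) := by nlinarith
  calc Real.exp (-ε * (-(Real.log ((P {ω | x ≤ ξ₁ ω ∧ y ≤ ξ₂ ω}).toReal))))
      ≤ Real.exp (ε * Real.log B + (-(ε * lam) * x) + (-(ε * mu) * y)) := Real.exp_le_exp.mpr this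
    _ = g (x, y) := by
        rw [hg]
        simp only
        rw [Real.rpow_def_of_pos hBpos, Real.exp_add, Real.exp_add, mul_comm (Real.log B) ε]
end

section
/- Let m > 1 and m' = m/(m−1). The one-dimensional Laplace integral I_m(λ) = ∫₀^∞ exp(λx − x^m/m) dx satisfies, for all sufficiently large λ, the upper bound I_m(λ) ≤ m^{2/m − 1} · e^{1/m} · Γ(1/m) · λ^{1/(m−1)} · exp(λ^{m'}/m'). -/
open Real MeasureTheory

lemma aux_eps (m : ℝ) (hm : 1 < m) :
    ∃ ε₀ : ℝ, 0 < ε₀ ∧ ε₀ < 1 ∧ ∀ ε : ℝ, 0 < ε → ε ≤ ε₀ →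
      (1 - ε) ^ (-(1 / (m - 1))) ≤ 1 + m / (m - 1) * ε := by
  have hm1 : 0 < m - 1 := by linarith
  set p : ℝ := -(1 / (m - 1)) with hp
  have hderiv : HasDerivAt (fun ε : ℝ => (1 - ε) ^ p) (1 / (m - 1)) 0 := by
    have h1 : HasDerivAt (fun ε : ℝ => 1 - ε) (-1) 0 := by
      simpa using (hasDerivAt_id (0:ℝ)).const_sub 1
    have := h1.rpow_const (p := p) (by norm_num)
    simpa [hp] using this
  have hslope := hasDerivAt_iff_tendsto_slope.mp hderiv
  have hlt : 1 / (m - 1) < m / (m - 1) := by gcongr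
  have hev : ∀ᶠ ε in nhdsWithin 0 {(0:ℝ)}ᶜ,
      slope (fun ε : ℝ => (1 - ε) ^ p) 0 ε < m / (m - 1) :=
    hslope.eventually_lt_const hlt
  rw [eventually_nhdsWithin_iff, Metric.eventually_nhds_iff] at hev
  obtain ⟨δ, hδ, hδ'⟩ := hev
  refine ⟨min (δ/2) (1/2), by positivity, by
      have := min_le_right (δ/2) (1/2); linarith, fun ε hε hεle => ?_⟩
  have hεδ : dist ε 0 < δ := by
    rw [Real.dist_eq, sub_zero, abs_of_pos hε]
    have := le_trans hεle (min_le_left _ _); linarith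
  have hne : ε ∈ ({(0:ℝ)}ᶜ : Set ℝ) := by simp [ne_of_gt hε]
  have hs := hδ' hεδ hne
  rw [slope_def_field] at hs
  have h0 : (fun ε : ℝ => (1 - ε) ^ p) 0 = 1 := by simp
  simp only [h0] at hs
  have : ((1 - ε) ^ p - 1) / (ε - 0) < m / (m - 1) := hs
  rw [sub_zero, div_lt_iff₀ hε] at this
  nlinarith [this]

/-- upper bound for I_m(λ) = ∫₀^∞ exp(λx − x^m/m) dx: for all
sufficiently large λ,
I_m(λ) ≤ m^{2/m − 1} e^{1/m} Γ(1/m) λ^{1/(m−1)} exp(λ^{m'}/m'). -/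
theorem stmt10 (m : ℝ) (hm : 1 < m) :
    ∃ lam₀ : ℝ, ∀ lam : ℝ, lam₀ ≤ lam →
      (∫ x in Set.Ici (0 : ℝ), Real.exp (lam * x - x ^ m / m))
        ≤ m ^ (2 / m - 1) * Real.exp (1 / m) * Real.Gamma (1 / m) *
          lam ^ (1 / (m - 1)) * Real.exp (lam ^ (m / (m - 1)) / (m / (m - 1))) := by
  obtain ⟨ε₀, hε₀, hε₀1, haux⟩ := aux_eps m hm
  have hm0 : (0:ℝ) < m := by linarith
  have hm1 : (0:ℝ) < m - 1 := by linarith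
  set q : ℝ := m / (m - 1) with hqdef
  have hq0 : 0 < q := by positivity
  have conj : m.HolderConjugate q := (Real.holderConjugate_iff_eq_conjExponent hm).mpr rfl
  refine ⟨max 1 ((1/(m*ε₀)) ^ (1/q)), fun lam hlam => ?_⟩
  have hlam1 : (1:ℝ) ≤ lam := le_trans (le_max_left _ _) hlam
  have hlam0 : (0:ℝ) < lam := by linarith
  have hlamq : 1/(m*ε₀) ≤ lam ^ q := by
    have h1 : (1/(m*ε₀)) ^ (1/q) ≤ lam := le_trans (le_max_right _ _) hlam
    have h2 := Real.rpow_le_rpow (by positivity) h1 hq0.le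
    rwa [← Real.rpow_mul (by positivity), one_div_mul_cancel hq0.ne', Real.rpow_one] at h2
  have hlamq0 : (0:ℝ) < lam ^ q := Real.rpow_pos_of_pos hlam0 q
  set ε : ℝ := 1/(m * lam ^ q) with hεdef
  have hε : 0 < ε := by positivity
  have hεlam : ε * lam ^ q = 1/m := by
    rw [hεdef]; field_simp
  have hεle : ε ≤ ε₀ := by
    rw [hεdef, div_le_iff₀ (by positivity)]
    have h3 : (m*ε₀) * (1/(m*ε₀)) = 1 := mul_one_div_cancel (by positivity)
    nlinarith [mul_le_mul_of_nonneg_left hlamq (by positivity : (0:ℝ) ≤ ε₀ * m)]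
  have hc : 0 < 1 - ε := by linarith [lt_of_le_of_lt hεle hε₀1]
  -- pointwise bound
  have hpt : ∀ x : ℝ, 0 ≤ x →
      lam * x - x ^ m / m ≤ lam ^ q / q + 1/m - ε/m * x ^ m := by
    intro x hx
    have ha : (0:ℝ) ≤ lam * (1-ε) ^ (-(1/m)) := by positivity
    have hb : (0:ℝ) ≤ x * (1-ε) ^ (1/m) := by positivity
    have hY := Real.young_inequality_of_nonneg ha hb conj.symm
    have hab : (lam * (1-ε) ^ (-(1/m))) * (x * (1-ε) ^ (1/m)) = lam * x := by
      rw [mul_mul_mul_comm, ← Real.rpow_add hc, neg_add_cancel, Real.rpow_zero, mul_one]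
    have hexp : -(1/m) * q = -(1/(m-1)) := by rw [hqdef]; field_simp
    have haq : (lam * (1-ε) ^ (-(1/m))) ^ q = lam ^ q * (1-ε) ^ (-(1/(m-1))) := by
      rw [Real.mul_rpow hlam0.le (by positivity), ← Real.rpow_mul hc.le, hexp]
    have hbm : (x * (1-ε) ^ (1/m)) ^ m = x ^ m * (1-ε) := by
      rw [Real.mul_rpow hx (by positivity), ← Real.rpow_mul hc.le,
        one_div_mul_cancel hm0.ne', Real.rpow_one]
    rw [hab, haq, hbm] at hY
    have hA := haux ε hε hεle
    have h5 : lam ^ q * (1-ε) ^ (-(1/(m-1))) / q ≤ lam ^ q / q + 1/m := by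
      have h7 : lam ^ q * (1 + q*ε) / q = lam ^ q / q + ε * lam ^ q := by
        field_simp
      calc lam ^ q * (1-ε) ^ (-(1/(m-1))) / q ≤ lam ^ q * (1 + q*ε) / q := by gcongr
        _ = lam ^ q / q + ε * lam ^ q := h7
        _ = lam ^ q / q + 1/m := by rw [hεlam]
    have h8 : x ^ m * (1-ε) / m = x ^ m / m - ε * x ^ m / m := by ring
    rw [h8] at hY
    rw [div_mul_eq_mul_div]
    linarith
  set K := Real.exp (lam ^ q / q + 1/m) with hK
  have hgInt : IntegrableOn (fun x : ℝ => Real.exp (-(ε/m) * x ^ m)) (Set.Ioi 0) := by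
    have := integrableOn_rpow_mul_exp_neg_mul_rpow (p := m) (s := 0) (b := ε/m)
      (by norm_num) hm0 (by positivity)
    simpa using this
  have hbound : ∀ x ∈ Set.Ioi (0:ℝ), Real.exp (lam*x - x ^ m/m) ≤ K * Real.exp (-(ε/m) * x ^ m) := by
    intro x hx
    rw [hK, ← Real.exp_add]
    apply Real.exp_le_exp.mpr
    have := hpt x (le_of_lt hx)
    linarith
  have hfm : AEStronglyMeasurable (fun x : ℝ => Real.exp (lam*x - x ^ m/m))
      (volume.restrict (Set.Ioi 0)) := by
    apply Measurable.aestronglyMeasurable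
    fun_prop
  have hfInt : IntegrableOn (fun x : ℝ => Real.exp (lam*x - x ^ m/m)) (Set.Ioi 0) := by
    apply Integrable.mono' (hgInt.const_mul K) hfm
    filter_upwards [ae_restrict_mem measurableSet_Ioi] with x hx
    rw [Real.norm_eq_abs, abs_of_pos (Real.exp_pos _)]
    exact hbound x hx
  have hrpow : (ε/m) ^ ((-1:ℝ)/m) = m ^ (2/m) * lam ^ (1/(m-1)) := by
    have he : ε/m = (m^(2:ℕ) * lam ^ q)⁻¹ := by
      rw [hεdef]; field_simp
    rw [he, Real.inv_rpow (by positivity), neg_div, Real.rpow_neg (by positivity), inv_inv,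
      Real.mul_rpow (by positivity) (by positivity), ← Real.rpow_natCast m 2,
      ← Real.rpow_mul hm0.le, ← Real.rpow_mul hlam0.le,
      show q * ((1:ℝ)/m) = 1/(m-1) by
        rw [hqdef]; field_simp [hm1.ne', hm0.ne']]
    rw [show ((2:ℕ):ℝ) * (1/m) = 2/m by push_cast; ring]
  have hGamma : Real.Gamma (1/m + 1) = (1/m) * Real.Gamma (1/m) := by
    rw [Real.Gamma_add_one (by positivity)]
  calc ∫ x in Set.Ici (0:ℝ), Real.exp (lam*x - x ^ m/m)
      = ∫ x in Set.Ioi (0:ℝ), Real.exp (lam*x - x ^ m/m) := integral_Ici_eq_integral_Ioi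
    _ ≤ ∫ x in Set.Ioi (0:ℝ), K * Real.exp (-(ε/m) * x ^ m) :=
        setIntegral_mono_on hfInt (hgInt.const_mul K) measurableSet_Ioi hbound
    _ = K * ∫ x in Set.Ioi (0:ℝ), Real.exp (-(ε/m) * x ^ m) := integral_const_mul K _
    _ = K * ((ε/m) ^ ((-1:ℝ)/m) * Real.Gamma (1/m + 1)) := by
        rw [integral_exp_neg_mul_rpow hm0 (by positivity)]
    _ = m ^ (2 / m - 1) * Real.exp (1 / m) * Real.Gamma (1 / m) *
          lam ^ (1 / (m - 1)) * Real.exp (lam ^ q / q) := by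
        rw [hK, Real.exp_add, hrpow, hGamma, Real.rpow_sub hm0, Real.rpow_one]
        ring
end

section
/- Let m > 1 and m' = m/(m−1). Then lim_{λ→∞} ln I_m(λ) / (λ^{m'}/m') = 1, where I_m(λ) = ∫₀^∞ exp(λx − x^m/m) dx. -/
open Real MeasureTheory Filter

/-- logarithmic Laplace asymptotic:
lim_{λ→∞} ln I_m(λ) / (λ^{m'}/m') = 1, where I_m(λ) = ∫₀^∞ exp(λx − x^m/m) dx
and m' = m/(m−1). -/
theorem stmt11 (m : ℝ) (hm : 1 < m) :
    Tendsto
      (fun lam : ℝ =>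
        Real.log (∫ x in Set.Ici (0 : ℝ), Real.exp (lam * x - x ^ m / m)) /
          (lam ^ (m / (m - 1)) / (m / (m - 1))))
      atTop (nhds 1) := by
  have hm0 : (0 : ℝ) < m := lt_trans one_pos hm
  set q : ℝ := m / (m - 1) with hqdef
  have hconj : m.HolderConjugate q := (Real.holderConjugate_iff_eq_conjExponent hm).2 rfl
  have hq1 : 1 < q := hconj.symm.lt
  have hq0 : (0 : ℝ) < q := lt_trans one_pos hq1
  -- Young's inequality specialised
  have hyoung : ∀ a x : ℝ, 0 ≤ a → 0 ≤ x → a * x ≤ a ^ q / q + x ^ m / m := by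
    intro a x ha hx
    have := Real.young_inequality_of_nonneg ha hx hconj.symm
    linarith
  -- continuity / measurability
  have hcont : ∀ lam : ℝ, Continuous fun x : ℝ => Real.exp (lam * x - x ^ m / m) := by
    intro lam
    have h1 : Continuous fun x : ℝ => x ^ m :=
      continuous_iff_continuousAt.2 fun x =>
        Real.continuousAt_rpow_const x m (Or.inr hm0.le)
    exact (((continuous_const.mul continuous_id).sub (h1.div_const m)).rexp)
  have hexpg : IntegrableOn (fun x : ℝ => Real.exp (-x)) (Set.Ici 0) := by
    have := (exp_neg_integrableOn_Ioi (0 : ℝ) one_pos)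
    simp only [neg_mul, one_mul] at this
    exact (integrableOn_Ici_iff_integrableOn_Ioi).2 this
  -- integrability
  have hint : ∀ lam : ℝ, 0 ≤ lam →
      IntegrableOn (fun x : ℝ => Real.exp (lam * x - x ^ m / m)) (Set.Ici 0) := by
    intro lam hlam
    refine Integrable.mono' (hexpg.const_mul (Real.exp ((lam + 1) ^ q / q)))
      ((hcont lam).aestronglyMeasurable.restrict) ?_
    refine ae_restrict_of_forall_mem measurableSet_Ici fun x hx => ?_
    have hx0 : (0 : ℝ) ≤ x := hx
    rw [norm_of_nonneg (Real.exp_nonneg _), ← Real.exp_add]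
    apply Real.exp_le_exp.2
    have := hyoung (lam + 1) x (by linarith) hx0
    nlinarith
  -- upper bound for the integral
  have hub : ∀ lam : ℝ, 0 ≤ lam →
      (∫ x in Set.Ici (0 : ℝ), Real.exp (lam * x - x ^ m / m)) ≤
        Real.exp ((lam + 1) ^ q / q) := by
    intro lam hlam
    have h1 : (∫ x in Set.Ici (0 : ℝ), Real.exp (lam * x - x ^ m / m)) ≤
        ∫ x in Set.Ici (0 : ℝ), Real.exp ((lam + 1) ^ q / q) * Real.exp (-x) := by
      refine setIntegral_mono_on (hint lam hlam)
        (hexpg.const_mul (Real.exp ((lam + 1) ^ q / q))) measurableSet_Ici fun x hx => ?_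
      have hx0 : (0 : ℝ) ≤ x := hx
      rw [← Real.exp_add]
      apply Real.exp_le_exp.2
      have := hyoung (lam + 1) x (by linarith) hx0
      nlinarith
    have h2 : (∫ x in Set.Ici (0 : ℝ), Real.exp ((lam + 1) ^ q / q) * Real.exp (-x))
        = Real.exp ((lam + 1) ^ q / q) := by
      rw [integral_const_mul]
      have h3 : (∫ x in Set.Ici (0 : ℝ), Real.exp (-x))
          = ∫ x in Set.Ioi (0 : ℝ), Real.exp (-x) :=
        setIntegral_congr_set Ioi_ae_eq_Ici.symm
      rw [h3, integral_exp_neg_Ioi_zero, mul_one]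
    linarith
  -- lower bound for the integral
  have hlb : ∀ lam : ℝ, 1 ≤ lam →
      Real.exp (lam ^ q / q - lam) ≤
        ∫ x in Set.Ici (0 : ℝ), Real.exp (lam * x - x ^ m / m) := by
    intro lam hlam
    have hlam0 : (0 : ℝ) < lam := lt_of_lt_of_le one_pos hlam
    set s : ℝ := lam ^ (1 / (m - 1)) with hsdef
    have hs1 : (1 : ℝ) ≤ s := by
      have h0 : lam ^ (0 : ℝ) ≤ lam ^ (1 / (m - 1)) :=
        Real.rpow_le_rpow_of_exponent_le hlam (div_nonneg zero_le_one (by linarith))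
      simpa [hsdef, one_div] using h0
    have hsm : s ^ m = lam ^ q := by
      rw [hsdef, ← Real.rpow_mul hlam0.le]
      congr 1
      rw [hqdef, div_mul_eq_mul_div, one_mul]
    have hls : lam * s = lam ^ q := by
      conv_lhs => rw [show lam * s = lam ^ (1 : ℝ) * s by rw [Real.rpow_one]]
      rw [hsdef, ← Real.rpow_add hlam0]
      congr 1
      rw [hqdef]
      have hne : m - 1 ≠ 0 := by linarith
      field_simp
      ring
    have hqm : lam ^ q / q = lam ^ q - lam ^ q / m := by
      have h := hconj.inv_add_inv_eq_one
      rw [div_eq_mul_inv, div_eq_mul_inv]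
      linear_combination (lam ^ q) * h
    -- pointwise bound on Icc (s-1) s
    have hpt : ∀ x ∈ Set.Icc (s - 1) s,
        Real.exp (lam ^ q / q - lam) ≤ Real.exp (lam * x - x ^ m / m) := by
      intro x hx
      apply Real.exp_le_exp.2
      have hx1 : s - 1 ≤ x := hx.1
      have hx2 : x ≤ s := hx.2
      have hx0 : (0 : ℝ) ≤ x := by linarith
      have hxm : x ^ m ≤ lam ^ q := by
        rw [← hsm]; exact Real.rpow_le_rpow hx0 hx2 hm0.le
      have h1 : lam * (s - 1) ≤ lam * x := by nlinarith
      have h2 : x ^ m / m ≤ lam ^ q / m := (div_le_div_iff_of_pos_right hm0).2 hxm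
      nlinarith
    have hsub : Set.Icc (s - 1) s ⊆ Set.Ici (0 : ℝ) := fun x hx => by
      have := hx.1; simp only [Set.mem_Ici]; linarith
    have hmono : (∫ x in Set.Icc (s - 1) s, Real.exp (lam * x - x ^ m / m)) ≤
        ∫ x in Set.Ici (0 : ℝ), Real.exp (lam * x - x ^ m / m) := by
      refine setIntegral_mono_set (hint lam hlam0.le) ?_ (HasSubset.Subset.eventuallyLE hsub)
      exact Filter.Eventually.of_forall fun x => (Real.exp_pos _).le
    have hconst : Real.exp (lam ^ q / q - lam) *
        (volume (Set.Icc (s - 1) s)).toReal ≤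
        ∫ x in Set.Icc (s - 1) s, Real.exp (lam * x - x ^ m / m) :=
      setIntegral_ge_of_const_le_real measurableSet_Icc
        (by simp [Real.volume_Icc]) hpt ((hint lam hlam0.le).mono_set hsub)
    have hvol : (volume (Set.Icc (s - 1) s)).toReal = 1 := by
      simp [Real.volume_Icc]
    rw [hvol, mul_one] at hconst
    linarith
  -- squeeze
  have hdenpos : ∀ lam : ℝ, 1 ≤ lam → 0 < lam ^ q / q := fun lam hlam =>
    div_pos (Real.rpow_pos_of_pos (lt_of_lt_of_le one_pos hlam) q) hq0
  refine tendsto_of_tendsto_of_tendsto_of_le_of_le'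
    (g := fun lam : ℝ => (lam ^ q / q - lam) / (lam ^ q / q))
    (h := fun lam : ℝ => ((lam + 1) ^ q / q) / (lam ^ q / q)) ?_ ?_ ?_ ?_
  · -- lower function tends to 1
    have heq : ∀ᶠ lam : ℝ in atTop,
        1 - q * lam ^ (1 - q) = (lam ^ q / q - lam) / (lam ^ q / q) := by
      filter_upwards [eventually_ge_atTop (1 : ℝ)] with lam hlam
      have hlam0 : (0 : ℝ) < lam := lt_of_lt_of_le one_pos hlam
      have hrq : (0 : ℝ) < lam ^ q := Real.rpow_pos_of_pos hlam0 q
      rw [Real.rpow_sub hlam0, Real.rpow_one]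
      field_simp
    refine Tendsto.congr' heq ?_
    have h0 : Tendsto (fun lam : ℝ => lam ^ (1 - q)) atTop (nhds 0) := by
      have := tendsto_rpow_neg_atTop (y := q - 1) (by linarith)
      simpa [neg_sub] using this
    have h1 : Tendsto (fun lam : ℝ => 1 - q * lam ^ (1 - q)) atTop (nhds (1 - q * 0)) :=
      tendsto_const_nhds.sub (h0.const_mul q)
    simpa using h1
  · -- upper function tends to 1
    have heq : ∀ᶠ lam : ℝ in atTop,
        (1 + lam⁻¹) ^ q = ((lam + 1) ^ q / q) / (lam ^ q / q) := by
      filter_upwards [eventually_ge_atTop (1 : ℝ)] with lam hlam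
      have hlam0 : (0 : ℝ) < lam := lt_of_lt_of_le one_pos hlam
      have hrq : (0 : ℝ) < lam ^ q := Real.rpow_pos_of_pos hlam0 q
      have h1 : (1 : ℝ) + lam⁻¹ = (lam + 1) / lam := by field_simp
      rw [h1, Real.div_rpow (by linarith) hlam0.le]
      field_simp
    refine Tendsto.congr' heq ?_
    have h0 : Tendsto (fun lam : ℝ => 1 + lam⁻¹) atTop (nhds (1 + 0)) :=
      tendsto_const_nhds.add tendsto_inv_atTop_zero
    have h1 := (Filter.Tendsto.rpow_const h0 (p := q) (Or.inr hq0.le))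
    simpa using h1
  · -- lower inequality
    filter_upwards [eventually_ge_atTop (1 : ℝ)] with lam hlam
    have hd := hdenpos lam hlam
    have hFpos : 0 < ∫ x in Set.Ici (0 : ℝ), Real.exp (lam * x - x ^ m / m) :=
      lt_of_lt_of_le (Real.exp_pos _) (hlb lam hlam)
    have hlog : lam ^ q / q - lam ≤
        Real.log (∫ x in Set.Ici (0 : ℝ), Real.exp (lam * x - x ^ m / m)) :=
      (Real.le_log_iff_exp_le hFpos).2 (hlb lam hlam)
    exact (div_le_div_iff_of_pos_right hd).2 hlog
  · -- upper inequality
    filter_upwards [eventually_ge_atTop (1 : ℝ)] with lam hlam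
    have hd := hdenpos lam hlam
    have hFpos : 0 < ∫ x in Set.Ici (0 : ℝ), Real.exp (lam * x - x ^ m / m) :=
      lt_of_lt_of_le (Real.exp_pos _) (hlb lam hlam)
    have hlog : Real.log (∫ x in Set.Ici (0 : ℝ), Real.exp (lam * x - x ^ m / m)) ≤
        (lam + 1) ^ q / q :=
      (Real.log_le_iff_le_exp hFpos).2 (hub lam (by linarith))
    exact (div_le_div_iff_of_pos_right hd).2 hlog
end

section
/- Let m > 1, r ∈ ℝ, m' = m/(m−1), and ζ_{m,r}(x) = m⁻¹ x^m (ln x)^r for x ≥ e. Then its Young–Fenchel transform satisfies the asymptotic equivalence ζ_{m,r}*(y) ~ (1/m') · (m−1)^{r/(m−1)} · y^{m'} · (ln y)^{−r/(m−1)} as y → ∞, i.e., the ratio of the two sides tends to 1. -/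
open Real Filter


noncomputable def Afun (m r y : ℝ) : ℝ :=
  (1 / (m / (m - 1))) * (m - 1) ^ (r / (m - 1)) * y ^ (m / (m - 1)) *
    (Real.log y) ^ (-(r / (m - 1)))

noncomputable def X0 (m r y : ℝ) : ℝ :=
  ((m - 1) / Real.log y) ^ (r / (m - 1)) * y ^ ((m - 1)⁻¹)

lemma X0_pos {m r : ℝ} (hm : 1 < m) {y : ℝ} (hy : 1 < y) : 0 < X0 m r y := by
  have h1 : 0 < Real.log y := Real.log_pos hy
  have h2 : 0 < m - 1 := by linarith
  unfold X0; positivity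

lemma Afun_pos {m r : ℝ} (hm : 1 < m) {y : ℝ} (hy : 1 < y) : 0 < Afun m r y := by
  have h1 : 0 < Real.log y := Real.log_pos hy
  have h2 : 0 < m - 1 := by linarith
  have h3 : 0 < m := by linarith
  unfold Afun; positivity

lemma X0_log_eq {m : ℝ} (r : ℝ) (hm : 1 < m) : (fun y => Real.log (X0 m r y)) =ᶠ[atTop]
    (fun y => (r / (m - 1)) * (Real.log (m - 1) - Real.log (Real.log y)) + (m - 1)⁻¹ * Real.log y) := by
  have hc : (0:ℝ) < m - 1 := by linarith
  filter_upwards [eventually_gt_atTop 1] with y hy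
  have hL : 0 < Real.log y := Real.log_pos hy
  unfold X0
  rw [Real.log_mul (by positivity) (by positivity), Real.log_rpow (by positivity),
    Real.log_rpow (by linarith), Real.log_div hc.ne' hL.ne']

lemma X0_tendsto {m r : ℝ} (hm : 1 < m) : Tendsto (X0 m r) atTop atTop := by
  have hc : (0:ℝ) < m - 1 := by linarith
  -- log X0 → ∞
  have hlogX : Tendsto (fun y => Real.log (X0 m r y)) atTop atTop := by
    refine Tendsto.congr' (X0_log_eq r hm).symm ?_
    have key : Tendsto (fun y : ℝ =>
        Real.log y * ((r / (m - 1)) * (Real.log (m - 1) / Real.log y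
          - Real.log (Real.log y) / Real.log y) + (m - 1)⁻¹)) atTop atTop := by
      apply Tendsto.atTop_mul_pos (C := (m-1)⁻¹) (by positivity) Real.tendsto_log_atTop
      have h1 : Tendsto (fun y : ℝ => Real.log (m - 1) / Real.log y) atTop (nhds 0) :=
        tendsto_const_nhds.div_atTop Real.tendsto_log_atTop
      have h2 : Tendsto (fun y : ℝ => Real.log (Real.log y) / Real.log y) atTop (nhds 0) :=
        (Real.isLittleO_log_id_atTop.tendsto_div_nhds_zero).comp Real.tendsto_log_atTop
      have := ((h1.sub h2).const_mul (r / (m - 1))).add_const (m - 1)⁻¹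
      simpa using this
    refine key.congr' ?_
    filter_upwards [eventually_gt_atTop 1] with y hy
    have hL : 0 < Real.log y := Real.log_pos hy
    field_simp
  have := Real.tendsto_exp_atTop.comp hlogX
  refine this.congr' ?_
  filter_upwards [eventually_gt_atTop 1] with y hy
  simp only [Function.comp_apply]
  exact Real.exp_log (X0_pos hm hy)

lemma u_tendsto {m : ℝ} (r : ℝ) (hm : 1 < m) :
    Tendsto (fun y => (m - 1) * Real.log (X0 m r y) / Real.log y) atTop (nhds 1) := by
  have hc : (0:ℝ) < m - 1 := by linarith
  have key : Tendsto (fun y : ℝ =>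
      r * (Real.log (m - 1) / Real.log y - Real.log (Real.log y) / Real.log y) + 1)
      atTop (nhds 1) := by
    have h1 : Tendsto (fun y : ℝ => Real.log (m - 1) / Real.log y) atTop (nhds 0) :=
      tendsto_const_nhds.div_atTop Real.tendsto_log_atTop
    have h2 : Tendsto (fun y : ℝ => Real.log (Real.log y) / Real.log y) atTop (nhds 0) :=
      (Real.isLittleO_log_id_atTop.tendsto_div_nhds_zero).comp Real.tendsto_log_atTop
    have := ((h1.sub h2).const_mul r).add_const 1
    simpa using this
  refine key.congr' ?_
  filter_upwards [X0_log_eq r hm, eventually_gt_atTop 1] with y hld hy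
  have hL : 0 < Real.log y := Real.log_pos hy
  rw [hld]
  field_simp

lemma lower_tendsto {m : ℝ} (r : ℝ) (hm : 1 < m) :
    Tendsto (fun y => (X0 m r y * y
        - m⁻¹ * (X0 m r y) ^ m * (Real.log (X0 m r y)) ^ r) / Afun m r y)
      atTop (nhds 1) := by
  have hc : (0:ℝ) < m - 1 := by linarith
  have hm0 : (0:ℝ) < m := by linarith
  set u : ℝ → ℝ := fun y => (m - 1) * Real.log (X0 m r y) / Real.log y with hu_def
  have hu : Tendsto u atTop (nhds 1) := u_tendsto r hm
  have hur : Tendsto (fun y => u y ^ r) atTop (nhds 1) := by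
    have hcont := (Real.continuousAt_rpow_const 1 r (Or.inl one_ne_zero)).tendsto.comp hu
    simpa [Function.comp_def] using hcont
  have key : Tendsto (fun y => m / (m - 1) - (m - 1)⁻¹ * u y ^ r) atTop (nhds 1) := by
    have := (hur.const_mul (m - 1)⁻¹).const_sub (m / (m - 1))
    have h1 : m / (m - 1) - (m - 1)⁻¹ * 1 = 1 := by field_simp
    rw [h1] at this
    exact this
  refine key.congr' ?_
  filter_upwards [eventually_gt_atTop 1, (X0_tendsto (r := r) hm).eventually_gt_atTop 1]
    with y hy hX1
  have hL : 0 < Real.log y := Real.log_pos hy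
  have hP : 0 < X0 m r y := X0_pos hm hy
  have hlX : 0 < Real.log (X0 m r y) := Real.log_pos hX1
  have hupos : 0 < u y := by
    rw [hu_def]; positivity
  set P := X0 m r y with hP_def
  set L := Real.log y with hL_def
  set c := m - 1 with hc_def
  have hA : 0 < Afun m r y := Afun_pos hm hy
  have hbase : 0 < c / L := by positivity
  -- h1 : P ^ m = P * ((c/L)^r * y)
  have h1 : P ^ m = P * ((c / L) ^ r * y) := by
    have hmsum : m = 1 + c := by rw [hc_def]; ring
    rw [hmsum, Real.rpow_add hP, Real.rpow_one]
    congr 1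
    rw [hP_def]
    unfold X0
    rw [Real.mul_rpow (by positivity) (by positivity),
      ← Real.rpow_mul hbase.le, ← Real.rpow_mul (by linarith : (0:ℝ) ≤ y),
      div_mul_cancel₀ _ hc.ne', inv_mul_cancel₀ hc.ne', Real.rpow_one]
  -- h2 : (log P) ^ r = u y ^ r * (L/c) ^ r
  have h2 : (Real.log P) ^ r = u y ^ r * (L / c) ^ r := by
    have hlP : Real.log P = u y * L / c := by
      rw [hu_def]; field_simp
      exact (mul_div_cancel_right₀ _ hL.ne').symm
    rw [hlP, div_eq_mul_inv, mul_assoc, ← div_eq_mul_inv (L) c,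
      Real.mul_rpow hupos.le (by positivity)]
  have hcancel : (c / L) ^ r * (L / c) ^ r = 1 := by
    rw [← Real.mul_rpow hbase.le (by positivity)]
    rw [div_mul_div_comm]
    rw [mul_comm c L, div_self (by positivity), Real.one_rpow]
  -- h3 : P * y = (m/(m-1)) * Afun
  have h3 : P * y = (m / c) * Afun m r y := by
    have hq : (m-1)⁻¹ + 1 = m / (m-1) := by
      have hne : m - 1 ≠ 0 := by linarith
      rw [eq_div_iff hne, add_mul, inv_mul_cancel₀ hne]; ring
    have hy1 : y ^ ((m-1)⁻¹) * y = y ^ (m / (m-1)) := by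
      nth_rewrite 2 [← Real.rpow_one y]
      rw [← Real.rpow_add (by linarith), hq]
    rw [hP_def]
    unfold Afun X0
    rw [Real.div_rpow hc.le hL.le, ← hc_def, ← hL_def, mul_assoc, hy1,
      Real.rpow_neg hL.le]
    field_simp
    ring
  symm
  rw [h1, h2]
  calc (P * y - m⁻¹ * (P * ((c / L) ^ r * y)) * (u y ^ r * (L / c) ^ r)) / Afun m r y
      = (P * y - m⁻¹ * (P * y) * u y ^ r * ((c / L) ^ r * (L / c) ^ r)) / Afun m r y := by
        ring
    _ = (P * y) * (1 - m⁻¹ * u y ^ r) / Afun m r y := by rw [hcancel]; ring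
    _ = Afun m r y * ((m / c) * (1 - m⁻¹ * u y ^ r)) / Afun m r y := by rw [h3]; ring
    _ = (m / c) * (1 - m⁻¹ * u y ^ r) := by rw [mul_div_cancel_left₀ _ hA.ne']
    _ = m / c - c⁻¹ * u y ^ r := by field_simp

lemma rpow_log_tendsto_zero {s : ℝ} (hs : 0 < s) (k : ℝ) :
    Tendsto (fun y : ℝ => y ^ (-s) * Real.log y ^ k) atTop (nhds 0) := by
  have h := (tendsto_rpow_mul_exp_neg_mul_atTop_nhds_zero k s hs).comp Real.tendsto_log_atTop
  refine h.congr' ?_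
  filter_upwards [eventually_gt_atTop 0] with y hy
  simp only [Function.comp_apply]
  rw [Real.rpow_def_of_pos hy]
  ring_nf

lemma regionI_eventually {m r : ℝ} (hm : 1 < m) {e : ℝ} (he : e < m / (m - 1))
    {K : ℝ} (hK : 0 < K) : ∀ᶠ y in atTop, y ^ e ≤ K * Afun m r y := by
  have hc : (0:ℝ) < m - 1 := by linarith
  have hm0 : (0:ℝ) < m := by linarith
  have hq : (0:ℝ) < m / (m - 1) := by positivity
  have hrt : Tendsto (fun y => y ^ e / Afun m r y) atTop (nhds 0) := by
    have base := (rpow_log_tendsto_zero (s := m / (m-1) - e) (by linarith) (r / (m-1))).const_mul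
      (m / (m-1) * ((m - 1) ^ (r / (m-1)))⁻¹)
    rw [mul_zero] at base
    refine base.congr' ?_
    filter_upwards [eventually_gt_atTop 1] with y hy
    have hy0 : (0:ℝ) < y := by linarith
    have hL : 0 < Real.log y := Real.log_pos hy
    have h1 : y ^ (-(m / (m-1) - e)) = (y ^ (m / (m-1) - e))⁻¹ := Real.rpow_neg hy0.le _
    have h2 : y ^ (m / (m-1) - e) = y ^ (m / (m-1)) / y ^ e := Real.rpow_sub hy0 _ _
    have h3 : Real.log y ^ (-(r / (m-1))) = (Real.log y ^ (r / (m-1)))⁻¹ :=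
      Real.rpow_neg hL.le _
    unfold Afun
    rw [h1, h2, h3]
    have hne1 : y ^ (m / (m-1)) ≠ 0 := (Real.rpow_pos_of_pos hy0 _).ne'
    have hne2 : y ^ e ≠ 0 := (Real.rpow_pos_of_pos hy0 _).ne'
    have hne3 : Real.log y ^ (r / (m-1)) ≠ 0 := (Real.rpow_pos_of_pos hL _).ne'
    have hne4 : (m - 1) ^ (r / (m-1)) ≠ 0 := (Real.rpow_pos_of_pos hc _).ne'
    field_simp
  filter_upwards [hrt.eventually_lt_const hK, eventually_gt_atTop 1] with y h hy
  have hA := Afun_pos (r := r) hm hy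
  rw [div_lt_iff₀ hA] at h
  linarith

lemma young_aux {m : ℝ} (hm : 1 < m) {C x y : ℝ} (hx : 0 ≤ x) (hy : 0 ≤ y) (hC : 0 < C) :
    x * y - C * x ^ m ≤ (1 / (m / (m - 1))) * (m * C) ^ (-(m - 1)⁻¹) * y ^ (m / (m - 1)) := by
  have hm0 : (0:ℝ) < m := by linarith
  have hc : (0:ℝ) < m - 1 := by linarith
  have hq : (0:ℝ) < m / (m - 1) := by positivity
  have hmC : (0:ℝ) < m * C := by positivity
  have hpq : m.HolderConjugate (m / (m - 1)) := Real.HolderConjugate.conjExponent hm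
  have key := Real.young_inequality_of_nonneg
    (a := x * (m * C) ^ (m⁻¹)) (b := y * (m * C) ^ (-m⁻¹))
    (by positivity) (by positivity) hpq
  have e1 : x * (m * C) ^ (m⁻¹) * (y * (m * C) ^ (-m⁻¹)) = x * y := by
    have h1 : (m * C) ^ (m⁻¹) * (m * C) ^ (-m⁻¹) = 1 := by
      rw [← Real.rpow_add hmC]; simp
    calc x * (m * C) ^ (m⁻¹) * (y * (m * C) ^ (-m⁻¹))
        = x * y * ((m * C) ^ (m⁻¹) * (m * C) ^ (-m⁻¹)) := by ring
      _ = x * y := by rw [h1]; ring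
  have e2 : (x * (m * C) ^ (m⁻¹)) ^ m / m = C * x ^ m := by
    rw [Real.mul_rpow hx (by positivity), ← Real.rpow_mul hmC.le,
      inv_mul_cancel₀ hm0.ne', Real.rpow_one]
    field_simp
  have e3 : (y * (m * C) ^ (-m⁻¹)) ^ (m / (m - 1)) / (m / (m - 1))
      = (1 / (m / (m - 1))) * (m * C) ^ (-(m - 1)⁻¹) * y ^ (m / (m - 1)) := by
    rw [Real.mul_rpow hy (by positivity), ← Real.rpow_mul hmC.le]
    have : -m⁻¹ * (m / (m - 1)) = -(m - 1)⁻¹ := by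
      field_simp
    rw [this]; ring
  rw [e1, e2, e3] at key
  linarith

set_option maxHeartbeats 2000000 in
lemma upper_eventually {m : ℝ} (r : ℝ) (hm : 1 < m) {η : ℝ} (hη0 : 0 < η) (hη1 : η < 1) :
    ∀ᶠ y in atTop, ∀ x : ℝ, Real.exp 1 ≤ x →
      x * y - m⁻¹ * x ^ m * Real.log x ^ r
        ≤ (min ((1 - η) ^ r) ((1 + η) ^ r)) ^ (-(m - 1)⁻¹) * Afun m r y := by
  have hc : (0:ℝ) < m - 1 := by linarith
  have hm0 : (0:ℝ) < m := by linarith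
  set ρ : ℝ := (m - 1)⁻¹ with hρ_def
  have hρ : 0 < ρ := by positivity
  set μ : ℝ := min ((1 - η) ^ r) ((1 + η) ^ r) with hμ_def
  have hμpos : 0 < μ := lt_min (Real.rpow_pos_of_pos (by linarith) r)
    (Real.rpow_pos_of_pos (by linarith) r)
  set K : ℝ := μ ^ (-ρ) with hK_def
  have hKpos : 0 < K := Real.rpow_pos_of_pos hμpos _
  set a : ℝ := (1 - η) * ρ with ha_def
  set b : ℝ := (1 + η) * ρ with hb_def
  have hapos : 0 < a := mul_pos (by linarith) hρ
  have hbpos : 0 < b := mul_pos (by linarith) hρ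
  set μ'' : ℝ := min (a ^ r) (b ^ r) with hμ''_def
  have hμ''pos : 0 < μ'' := lt_min (Real.rpow_pos_of_pos hapos r)
    (Real.rpow_pos_of_pos hbpos r)
  set δ : ℝ := η * (m - 1) / (2 * (|r| + 1)) with hδ_def
  have habs : (0:ℝ) < |r| + 1 := by positivity
  have hδpos : 0 < δ := div_pos (mul_pos hη0 hc) (by positivity : (0:ℝ) < 2*(|r|+1))
  set s : ℝ := η * (1 - η) / 2 with hs_def
  have hspos : 0 < s := by rw [hs_def]; exact div_pos (mul_pos hη0 (by linarith)) two_pos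
  have hμeq : μ = μ'' * (m - 1) ^ r := by
    rw [hμ''_def, min_mul_of_nonneg _ _ (Real.rpow_nonneg hc.le r),
      ← Real.mul_rpow hapos.le hc.le, ← Real.mul_rpow hbpos.le hc.le]
    have e1 : a * (m - 1) = 1 - η := by rw [ha_def, hρ_def]; field_simp
    have e2 : b * (m - 1) = 1 + η := by rw [hb_def, hρ_def]; field_simp
    rw [e1, e2, hμ_def]
  filter_upwards [eventually_gt_atTop 1,
    regionI_eventually (r := r) hm (e := 1 + a)
      (by rw [ha_def, hρ_def, div_eq_mul_inv]
          nlinarith [mul_pos hη0 (inv_pos.mpr hc), mul_inv_cancel₀ hc.ne']) hKpos,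
    (tendsto_rpow_atTop hη0).eventually_ge_atTop m,
    (tendsto_rpow_atTop hspos).eventually_ge_atTop (m * δ ^ r)]
    with y hy hIa hIIIa hIIIb
  intro x hex
  have hy0 : (0:ℝ) < y := by linarith
  have hL : 0 < Real.log y := Real.log_pos hy
  have hA : 0 < Afun m r y := Afun_pos (r := r) hm hy
  have hx1 : (1:ℝ) < x := lt_of_lt_of_le (by
    calc (1:ℝ) < Real.exp 1 := by nlinarith [Real.exp_one_gt_d9]
    ) hex
  have hx0 : (0:ℝ) < x := by linarith
  have hlx : (1:ℝ) ≤ Real.log x := by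
    rwa [Real.le_log_iff_exp_le hx0]
  have hlx0 : (0:ℝ) < Real.log x := by linarith
  rcases le_or_gt x (y ^ a) with hxa | hxa
  · -- Region I
    have hz : 0 ≤ m⁻¹ * x ^ m * Real.log x ^ r := by positivity
    calc x * y - m⁻¹ * x ^ m * Real.log x ^ r ≤ x * y := by linarith
      _ ≤ y ^ a * y := mul_le_mul_of_nonneg_right hxa hy0.le
      _ = y ^ (1 + a) := by
          rw [Real.rpow_add hy0, Real.rpow_one]; ring
      _ ≤ K * Afun m r y := hIa
  rcases le_or_gt x (y ^ b) with hxb | hxb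
  · -- Region II
    have hlb : a * Real.log y ≤ Real.log x := by
      calc a * Real.log y = Real.log (y ^ a) := (Real.log_rpow hy0 a).symm
        _ ≤ Real.log x := Real.log_le_log (Real.rpow_pos_of_pos hy0 a) hxa.le
    have hub : Real.log x ≤ b * Real.log y := by
      calc Real.log x ≤ Real.log (y ^ b) := Real.log_le_log hx0 hxb
        _ = b * Real.log y := Real.log_rpow hy0 b
    have hmin : μ'' * Real.log y ^ r ≤ Real.log x ^ r := by
      rcases le_or_gt 0 r with hr | hr
      · calc μ'' * Real.log y ^ r ≤ a ^ r * Real.log y ^ r :=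
              mul_le_mul_of_nonneg_right (min_le_left _ _) (Real.rpow_nonneg hL.le r)
          _ = (a * Real.log y) ^ r := (Real.mul_rpow hapos.le hL.le).symm
          _ ≤ Real.log x ^ r := Real.rpow_le_rpow (by positivity) hlb hr
      · calc μ'' * Real.log y ^ r ≤ b ^ r * Real.log y ^ r :=
              mul_le_mul_of_nonneg_right (min_le_right _ _) (Real.rpow_nonneg hL.le r)
          _ = (b * Real.log y) ^ r := (Real.mul_rpow hbpos.le hL.le).symm
          _ ≤ Real.log x ^ r :=
              Real.rpow_le_rpow_of_nonpos hlx0 hub hr.le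
    have hCpos : 0 < m⁻¹ * (μ'' * Real.log y ^ r) := by positivity
    have hstep : x * y - m⁻¹ * x ^ m * Real.log x ^ r
        ≤ x * y - m⁻¹ * (μ'' * Real.log y ^ r) * x ^ m := by
      have hxm : (0:ℝ) ≤ m⁻¹ * x ^ m := by positivity
      have h := mul_le_mul_of_nonneg_left hmin hxm
      have e1 : m⁻¹ * x ^ m * (μ'' * Real.log y ^ r)
          = m⁻¹ * (μ'' * Real.log y ^ r) * x ^ m := by ring
      rw [e1] at h
      linarith
    have hyoung := young_aux hm hx0.le hy0.le hCpos
    have hmC : m * (m⁻¹ * (μ'' * Real.log y ^ r)) = μ'' * Real.log y ^ r := by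
      field_simp
    rw [hmC] at hyoung
    have hfinal : (1 / (m / (m - 1))) * (μ'' * Real.log y ^ r) ^ (-(m - 1)⁻¹) * y ^ (m / (m - 1))
        = K * Afun m r y := by
      have e1 : (μ'' * Real.log y ^ r) ^ (-ρ)
          = μ'' ^ (-ρ) * Real.log y ^ (-(r / (m - 1))) := by
        rw [Real.mul_rpow hμ''pos.le (Real.rpow_nonneg hL.le r), ← Real.rpow_mul hL.le]
        congr 2
        rw [hρ_def]; ring
      have e2 : μ'' ^ (-ρ) = K * (m - 1) ^ (r / (m - 1)) := by
        rw [hK_def, hμeq, Real.mul_rpow hμ''pos.le (Real.rpow_nonneg hc.le r),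
          ← Real.rpow_mul hc.le, mul_assoc, ← Real.rpow_add hc]
        have : r * -ρ + r / (m - 1) = 0 := by rw [hρ_def]; ring
        rw [this, Real.rpow_zero, mul_one]
      rw [← hρ_def] at *
      rw [e1, e2]
      unfold Afun
      ring
    calc x * y - m⁻¹ * x ^ m * Real.log x ^ r
        ≤ x * y - m⁻¹ * (μ'' * Real.log y ^ r) * x ^ m := hstep
      _ ≤ (1 / (m / (m - 1))) * (μ'' * Real.log y ^ r) ^ (-(m - 1)⁻¹) * y ^ (m / (m - 1)) :=
          hyoung
      _ = K * Afun m r y := hfinal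
  · -- Region III : show nonpositive
    have hKA : 0 ≤ K * Afun m r y := by positivity
    have hmain : x * y ≤ m⁻¹ * x ^ m * Real.log x ^ r := by
      rcases le_or_gt 0 r with hr | hr
      · -- r ≥ 0
        have h1 : (1:ℝ) ≤ Real.log x ^ r := by
          rw [← Real.one_rpow r]
          exact Real.rpow_le_rpow zero_le_one hlx hr
        have h2 : x * x ^ (m - 1) = x ^ m := by
          have h := Real.rpow_add hx0 1 (m - 1)
          rw [Real.rpow_one] at h
          rw [← h]; congr 1; ring
        have h3 : y ^ (1 + η) ≤ x ^ (m - 1) := by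
          calc y ^ (1 + η) = (y ^ b) ^ (m - 1) := by
                rw [← Real.rpow_mul hy0.le]
                congr 1
                rw [hb_def, hρ_def]; field_simp
            _ ≤ x ^ (m - 1) :=
                Real.rpow_le_rpow (Real.rpow_nonneg hy0.le b) hxb.le hc.le
        have h4 : m * y ≤ y ^ (1 + η) := by
          calc m * y ≤ y ^ η * y := mul_le_mul_of_nonneg_right hIIIa hy0.le
            _ = y ^ (1 + η) := by rw [Real.rpow_add hy0, Real.rpow_one]; ring
        calc x * y = m⁻¹ * (x * (m * y)) := by field_simp
          _ ≤ m⁻¹ * (x * x ^ (m - 1)) := by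
              have : x * (m * y) ≤ x * x ^ (m-1) :=
                mul_le_mul_of_nonneg_left (le_trans h4 h3) hx0.le
              exact mul_le_mul_of_nonneg_left this (by positivity)
          _ = m⁻¹ * x ^ m := by rw [← h2]
          _ ≤ m⁻¹ * x ^ m * Real.log x ^ r := by
              have hnn : (0:ℝ) ≤ m⁻¹ * x ^ m := by positivity
              have h := mul_le_mul_of_nonneg_left h1 hnn
              rw [mul_one] at h
              exact h
      · -- r < 0
        have hδr : 0 < δ ^ r := Real.rpow_pos_of_pos hδpos r
        have h1 : (x ^ δ / δ) ^ r ≤ Real.log x ^ r :=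
          Real.rpow_le_rpow_of_nonpos hlx0
            (Real.log_le_rpow_div hx0.le hδpos) hr.le
        have h2 : (x ^ δ / δ) ^ r = x ^ (δ * r) / δ ^ r := by
          rw [Real.div_rpow (Real.rpow_nonneg hx0.le δ) hδpos.le,
            ← Real.rpow_mul hx0.le]
        have hδbound : δ * (-r) ≤ η * (m - 1) / 2 := by
          have hra : -r ≤ |r| + 1 := by
            have := neg_le_abs r; linarith
          calc δ * (-r) ≤ δ * (|r| + 1) := mul_le_mul_of_nonneg_left hra hδpos.le
            _ = η * (m - 1) / 2 := by rw [hδ_def]; field_simp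
        have hexp : 1 + (m - 1) * (1 - η / 2) ≤ m + δ * r := by nlinarith
        have h3 : x ^ (1 + (m - 1) * (1 - η / 2)) ≤ x ^ (m + δ * r) :=
          Real.rpow_le_rpow_of_exponent_le hx1.le hexp
        have h4 : x ^ (1 + (m - 1) * (1 - η / 2)) = x * x ^ ((m - 1) * (1 - η / 2)) := by
          rw [Real.rpow_add hx0, Real.rpow_one]
        have h5 : y ^ (1 + s) ≤ x ^ ((m - 1) * (1 - η / 2)) := by
          calc y ^ (1 + s) = (y ^ b) ^ ((m - 1) * (1 - η / 2)) := by
                rw [← Real.rpow_mul hy0.le]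
                congr 1
                rw [hb_def, hρ_def, hs_def]; field_simp; ring
            _ ≤ x ^ ((m - 1) * (1 - η / 2)) :=
                Real.rpow_le_rpow (Real.rpow_nonneg hy0.le b) hxb.le
                  (by nlinarith)
        have h6 : y * (m * δ ^ r) ≤ y ^ (1 + s) := by
          calc y * (m * δ ^ r) ≤ y * y ^ s := mul_le_mul_of_nonneg_left hIIIb hy0.le
            _ = y ^ (1 + s) := by rw [Real.rpow_add hy0, Real.rpow_one]
        -- chain
        have hchain : x * (y * (m * δ ^ r)) ≤ x ^ (m + δ * r) := by
          calc x * (y * (m * δ ^ r)) ≤ x * x ^ ((m - 1) * (1 - η / 2)) :=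
                mul_le_mul_of_nonneg_left (le_trans h6 h5) hx0.le
            _ = x ^ (1 + (m - 1) * (1 - η / 2)) := h4.symm
            _ ≤ x ^ (m + δ * r) := h3
        have hfin : m⁻¹ * x ^ (m + δ * r) / δ ^ r ≤ m⁻¹ * x ^ m * Real.log x ^ r := by
          have e3 : m⁻¹ * x ^ (m + δ * r) / δ ^ r = m⁻¹ * x ^ m * (x ^ (δ * r) / δ ^ r) := by
            rw [Real.rpow_add hx0 m (δ * r)]
            field_simp
          rw [e3, ← h2]
          exact mul_le_mul_of_nonneg_left h1 (by positivity)
        calc x * y = m⁻¹ * (x * (y * (m * δ ^ r))) / δ ^ r := by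
              field_simp
          _ ≤ m⁻¹ * x ^ (m + δ * r) / δ ^ r := by
              have hmono : m⁻¹ * (x * (y * (m * δ ^ r))) ≤ m⁻¹ * x ^ (m + δ * r) :=
                mul_le_mul_of_nonneg_left hchain (by positivity)
              rw [div_eq_mul_inv, div_eq_mul_inv]
              exact mul_le_mul_of_nonneg_right hmono (by positivity)
          _ ≤ m⁻¹ * x ^ m * Real.log x ^ r := hfin
    linarith

/-- for m > 1, r ∈ ℝ, m' = m/(m−1) and
ζ_{m,r}(x) = m⁻¹ x^m (ln x)^r on [e,∞), the Young–Fenchel transform satisfies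
ζ_{m,r}*(y) ~ (1/m')·(m−1)^{r/(m−1)}·y^{m'}·(ln y)^{−r/(m−1)} as y → ∞. -/
theorem stmt19 (m r : ℝ) (hm : 1 < m) :
    Tendsto
      (fun y : ℝ =>
        sSup {t : ℝ | ∃ x : ℝ, Real.exp 1 ≤ x ∧
            t = x * y - m⁻¹ * x ^ m * (Real.log x) ^ r} /
          ((1 / (m / (m - 1))) * (m - 1) ^ (r / (m - 1)) * y ^ (m / (m - 1)) *
            (Real.log y) ^ (-(r / (m - 1)))))
      atTop (nhds 1) := by
  have hc : (0:ℝ) < m - 1 := by linarith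
  rw [Metric.tendsto_nhds]
  intro ε hε
  set F : ℝ → ℝ := fun η => (min ((1 - η) ^ r) ((1 + η) ^ r)) ^ (-(m - 1)⁻¹) with hF_def
  have hFcont : ContinuousAt F 0 := by
    have h1 : ContinuousAt (fun η : ℝ => (1 - η) ^ r) 0 := by
      apply ContinuousAt.rpow_const (by fun_prop)
      left; norm_num
    have h2 : ContinuousAt (fun η : ℝ => (1 + η) ^ r) 0 := by
      apply ContinuousAt.rpow_const (by fun_prop)
      left; norm_num
    apply ContinuousAt.rpow_const (h1.min h2)
    left
    simp [Real.one_rpow]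
  have hF0 : F 0 = 1 := by
    simp [hF_def, Real.one_rpow]
  have hev : ∀ᶠ η in nhds (0:ℝ), F η < 1 + ε := by
    have hmem : Set.Iio (1 + ε) ∈ nhds (F 0) := by
      rw [hF0]; exact Iio_mem_nhds (by linarith)
    exact hFcont hmem
  obtain ⟨δ₀, hδ₀pos, hball⟩ := Metric.eventually_nhds_iff.mp hev
  set η : ℝ := min (δ₀ / 2) (1 / 2) with hη_def
  have hη0 : 0 < η := lt_min (by linarith) (by norm_num)
  have hη1 : η < 1 := lt_of_le_of_lt (min_le_right _ _) (by norm_num)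
  have hηδ : dist η 0 < δ₀ := by
    rw [Real.dist_eq, sub_zero, abs_of_pos hη0]
    calc η ≤ δ₀ / 2 := min_le_left _ _
      _ < δ₀ := by linarith
  have hKlt : F η < 1 + ε := hball hηδ
  have hKpos : 0 < F η := by
    have hμpos : 0 < min ((1 - η) ^ r) ((1 + η) ^ r) :=
      lt_min (Real.rpow_pos_of_pos (by linarith) r) (Real.rpow_pos_of_pos (by linarith) r)
    exact Real.rpow_pos_of_pos hμpos _
  filter_upwards [upper_eventually r hm hη0 hη1,
    (lower_tendsto r hm).eventually (eventually_gt_nhds (show 1 - ε < 1 by linarith)),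
    (X0_tendsto (r := r) hm).eventually_ge_atTop (Real.exp 1),
    eventually_gt_atTop 1] with y hup hlow hX0e hy
  have hA : 0 < Afun m r y := Afun_pos hm hy
  set S : Set ℝ := {t : ℝ | ∃ x : ℝ, Real.exp 1 ≤ x ∧
      t = x * y - m⁻¹ * x ^ m * (Real.log x) ^ r} with hS_def
  have hbdd : ∀ t ∈ S, t ≤ F η * Afun m r y := by
    rintro t ⟨x, hx, rfl⟩
    exact hup x hx
  have hne : S.Nonempty := ⟨_, ⟨Real.exp 1, le_refl _, rfl⟩⟩
  have hbddAbove : BddAbove S := ⟨F η * Afun m r y, fun t ht => hbdd t ht⟩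
  have hupper : sSup S ≤ F η * Afun m r y := csSup_le hne hbdd
  have hmem : (X0 m r y * y - m⁻¹ * (X0 m r y) ^ m * (Real.log (X0 m r y)) ^ r) ∈ S :=
    ⟨X0 m r y, hX0e, rfl⟩
  have hlower := le_csSup hbddAbove hmem
  have hAeq : (1 / (m / (m - 1))) * (m - 1) ^ (r / (m - 1)) * y ^ (m / (m - 1)) *
      (Real.log y) ^ (-(r / (m - 1))) = Afun m r y := rfl
  rw [hAeq, Real.dist_eq, abs_sub_lt_iff]
  constructor
  · have h1 : sSup S / Afun m r y ≤ F η := by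
      rw [div_le_iff₀ hA]; linarith
    linarith
  · have h1 : (X0 m r y * y - m⁻¹ * (X0 m r y) ^ m * (Real.log (X0 m r y)) ^ r) / Afun m r y
        ≤ sSup S / Afun m r y := by
      gcongr
    linarith
end
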